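/- If G is an r-regular graph having a star set X for a non-main eigenvalue μ such that G - X = K_s ∇ tK_1 with s, t ≥ 2, and if t + μ = 0, then μ = -2, t = 2, and G is the cocktail party graph, i.e., G is the complement of (s+1)K_2 (equivalently, K_{2s+2} minus a perfect matching). -/

import Mathlib

open Matrix

open scoped Classical

noncomputable section

variable {V : Type*} [Fintype V] [DecidableEq V]

/-- The real adjacency matrix of a graph. -/
def adjMat (G : SimpleGraph V) : Matrix V V ℝ :=
  letI := Classical.decRel G.Adj
  G.adjMatrix ℝ

/-- `μ` is an (adjacency) eigenvalue of `G`. -/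
def IsEigen (G : SimpleGraph V) (μ : ℝ) : Prop :=
  Module.End.HasEigenvalue (Matrix.toLin' (adjMat G)) μ

/-- The multiplicity of `μ` as an eigenvalue of `G`. -/
def eigMult (G : SimpleGraph V) (μ : ℝ) : ℕ :=
  Module.finrank ℝ (Module.End.eigenspace (Matrix.toLin' (adjMat G)) μ)

/-- `X` is a star set for `μ` in `G`: `|X|` equals the multiplicity of `μ` and `μ` is
not an eigenvalue of `G - X`. -/
def IsStarSet (G : SimpleGraph V) (μ : ℝ) (X : Finset V) : Prop :=
  X.card = eigMult G μ ∧ ¬ IsEigen (G.induce ((↑X : Set V)ᶜ)) μ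

/-- `μ` is a non-main eigenvalue: every `μ`-eigenvector is orthogonal to the
all-ones vector. -/
def IsNonMain (G : SimpleGraph V) (μ : ℝ) : Prop :=
  ∀ x : V → ℝ, (adjMat G).mulVec x = μ • x → x ⬝ᵥ (fun _ => 1) = 0

/-- The join `G ∇ H` of two graphs. -/
def joinG {α β : Type*} (G : SimpleGraph α) (H : SimpleGraph β) : SimpleGraph (α ⊕ β) where
  Adj u v :=
    match u, v with
    | .inl a, .inl b => G.Adj a b
    | .inr a, .inr b => H.Adj a b
    | _, _ => True
  symm := ⟨by rintro (a | a) (b | b) h <;> simp_all <;> exact h.symm⟩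
  loopless := ⟨by
    rintro (a | a) h
    · exact G.loopless.irrefl _ h
    · exact H.loopless.irrefl _ h⟩

/-- The perfect matching graph `nK_2` on `Fin n × Fin 2`. -/
def matchingG (n : ℕ) : SimpleGraph (Fin n × Fin 2) where
  Adj u v := u.1 = v.1 ∧ u.2 ≠ v.2
  symm := ⟨by rintro ⟨i, a⟩ ⟨j, b⟩ ⟨h1, h2⟩; exact ⟨h1.symm, h2.symm⟩⟩
  loopless := ⟨by rintro ⟨i, a⟩ ⟨_, h⟩; exact h rfl⟩

/-- Auxiliary: eigenvectors of a star set extend arbitrary functions on `X`. -/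
theorem star_ext {V : Type*} [Fintype V] [DecidableEq V] (G : SimpleGraph V) (μ : ℝ)
    (X : Finset V) (hcard : X.card = eigMult G μ)
    (hni : ¬ IsEigen (G.induce ((↑X : Set V)ᶜ)) μ) :
    ∀ g : {x : V // x ∈ X} → ℝ, ∃ f : V → ℝ, (adjMat G).mulVec f = μ • f ∧
      ∀ u : {x : V // x ∈ X}, f ↑u = g u := by
  set A := adjMat G with hAdef
  set E := Module.End.eigenspace (Matrix.toLin' A) μ with hEdef
  have hmemE : ∀ f : V → ℝ, f ∈ E ↔ A.mulVec f = μ • f := by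
    intro f
    rw [hEdef, Module.End.mem_eigenspace_iff, Matrix.toLin'_apply]
  let ρ : E →ₗ[ℝ] ({x : V // x ∈ X} → ℝ) :=
    { toFun := fun f u => (f : V → ℝ) ↑u
      map_add' := fun f g => rfl
      map_smul' := fun c f => rfl }
  have hent : ∀ v w : V, A v w = if G.Adj v w then 1 else 0 := by
    intro v w; simp [hAdef, adjMat, SimpleGraph.adjMatrix_apply]
  have hinj : Function.Injective ρ := by
    rw [injective_iff_map_eq_zero]
    intro f hf0
    have hfX : ∀ u : V, u ∈ X → (f : V → ℝ) u = 0 := by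
      intro u hu
      have := congrFun hf0 ⟨u, hu⟩
      exact this
    -- the restriction of f to the complement
    set g : ((↑X : Set V)ᶜ : Set V) → ℝ := fun w => (f : V → ℝ) ↑w with hgdef
    have hfeig : A.mulVec (f : V → ℝ) = μ • (f : V → ℝ) := (hmemE _).mp f.2
    have hgeq : (adjMat (G.induce ((↑X : Set V)ᶜ))).mulVec g = μ • g := by
      funext w
      have h1 : ∑ w' : V, A ↑w w' * (f : V → ℝ) w' = μ * (f : V → ℝ) ↑w := by
        have := congrFun hfeig ↑w
        simpa [Matrix.mulVec, dotProduct] using this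
      have h2 : ∑ w' : V, A ↑w w' * (f : V → ℝ) w'
          = ∑ w' ∈ Xᶜ, A ↑w w' * (f : V → ℝ) w' := by
        rw [← Finset.sum_compl_add_sum X (fun w' => A ↑w w' * (f:V→ℝ) w')]
        have : ∑ w' ∈ X, A ↑w w' * (f : V → ℝ) w' = 0 := by
          apply Finset.sum_eq_zero
          intro x hx; rw [hfX x hx, mul_zero]
        rw [this, add_zero]
      have h3 : ∑ w' ∈ Xᶜ, A ↑w w' * (f : V → ℝ) w'
          = ∑ w' : ((↑X : Set V)ᶜ : Set V), A ↑w ↑w' * (f : V → ℝ) ↑w' := by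
        rw [← Finset.sum_subtype Xᶜ (fun x => by simp) (fun w' => A ↑w w' * (f:V→ℝ) w')]
      have h4 : (adjMat (G.induce ((↑X : Set V)ᶜ))).mulVec g w
          = ∑ w' : ((↑X : Set V)ᶜ : Set V), A ↑w ↑w' * (f : V → ℝ) ↑w' := by
        simp only [Matrix.mulVec, dotProduct]
        apply Finset.sum_congr rfl
        intro x _
        have hentry : (adjMat (G.induce ((↑X : Set V)ᶜ))) w x = A ↑w ↑x := by
          have : (SimpleGraph.induce ((↑X : Set V)ᶜ) G).Adj w x ↔ G.Adj ↑w ↑x := Iff.rfl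
          simp only [adjMat, SimpleGraph.adjMatrix_apply, hent, this]
        rw [hentry]
      simp only [Pi.smul_apply, smul_eq_mul]
      rw [h4, ← h3, ← h2, h1]
    by_cases hg : g = 0
    · apply Subtype.ext
      funext v
      by_cases hv : v ∈ X
      · exact hfX v hv
      · have : g ⟨v, hv⟩ = 0 := by rw [hg]; rfl
        exact this
    · exfalso
      apply hni
      refine Module.End.hasEigenvalue_of_hasEigenvector (x := g) ⟨?_, hg⟩
      rw [Module.End.mem_eigenspace_iff, Matrix.toLin'_apply]
      exact hgeq
  have hfinX : Module.finrank ℝ ({x : V // x ∈ X} → ℝ) = X.card := by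
    rw [Module.finrank_pi ℝ, Fintype.card_coe]
  have hsurj : Function.Surjective ρ := by
    have h1 : Module.finrank ℝ (LinearMap.range ρ) = Module.finrank ℝ ({x : V // x ∈ X} → ℝ) := by
      rw [LinearMap.finrank_range_of_inj hinj, hfinX, hcard]; rfl
    have h2 := Submodule.eq_top_of_finrank_eq h1
    exact LinearMap.range_eq_top.mp h2
  intro g
  obtain ⟨f, hf⟩ := hsurj g
  refine ⟨(f : V → ℝ), (hmemE _).mp f.2, ?_⟩
  intro u
  have := congrFun hf u
  exact this


/-- Auxiliary: adjacency in the complement of the matching graph. -/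
theorem matching_compl_adj (n : ℕ) (a b : Fin n × Fin 2) :
    (matchingG n)ᶜ.Adj a b ↔ a.1 ≠ b.1 := by
  constructor
  · rintro ⟨hne, hn⟩ h1
    apply hne
    have h2 : a.2 = b.2 := by
      by_contra h2
      exact hn ⟨h1, h2⟩
    exact Prod.ext h1 h2
  · intro h1
    exact ⟨fun hab => h1 (by rw [hab]), fun h => h1 h.1⟩

set_option maxHeartbeats 2000000 in
/-- Theorem 1: if an `r`-regular graph `G` has a star set `X` for a non-main
eigenvalue `μ` with star complement `G - X = K_s ∇ tK_1` (`s,t ≥ 2`) and `t + μ = 0`,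
then `μ = -2`, `t = 2`, and `G` is the complement of `(s+1)K_2`. -/
theorem main_theorem {V : Type*} [Fintype V] [DecidableEq V] (s t : ℕ)
    (hs : 2 ≤ s) (ht : 2 ≤ t) (r : ℕ) (G : SimpleGraph V)
    (hreg : G.IsRegularOfDegree r) (μ : ℝ) (hμ : IsEigen G μ) (hnm : IsNonMain G μ)
    (X : Finset V) (hstar : IsStarSet G μ X)
    (hiso : Nonempty ((G.induce ((↑X : Set V)ᶜ)) ≃g
      joinG (⊤ : SimpleGraph (Fin s)) (⊥ : SimpleGraph (Fin t))))
    (htμ : (t : ℝ) + μ = 0) :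
    μ = -2 ∧ t = 2 ∧ Nonempty (G ≃g (matchingG (s + 1))ᶜ) := by
  obtain ⟨e⟩ := hiso
  obtain ⟨hcard, hni⟩ := hstar
  set ι : Fin s ⊕ Fin t → V := fun z => ((e.symm z : ((↑X : Set V)ᶜ : Set V)) : V) with hι
  have hιadj : ∀ z z', G.Adj (ι z) (ι z') ↔
      (joinG (⊤ : SimpleGraph (Fin s)) (⊥ : SimpleGraph (Fin t))).Adj z z' := by
    intro z z'
    have h1 : (G.induce ((↑X : Set V)ᶜ)).Adj (e.symm z) (e.symm z') ↔
        (joinG (⊤ : SimpleGraph (Fin s)) (⊥ : SimpleGraph (Fin t))).Adj z z' := by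
      constructor
      · intro h
        have := e.map_rel_iff.mpr h
        simpa using this
      · intro h
        have := e.symm.map_rel_iff.mpr h
        exact this
    exact h1
  have hιinj : Function.Injective ι := by
    intro z z' h
    exact e.symm.toEquiv.injective (Subtype.ext h)
  have hιmem : ∀ z, ι z ∉ X := by
    intro z
    exact (e.symm z).2
  have hcover : ∀ v : V, v ∉ X → ∃ z, ι z = v := by
    intro v hv
    exact ⟨e ⟨v, hv⟩, by simp [hι]⟩
  set Sv : Fin s → V := fun i => ι (Sum.inl i) with hSv
  set Tv : Fin t → V := fun j => ι (Sum.inr j) with hTv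
  have hSS : ∀ i i', G.Adj (Sv i) (Sv i') ↔ i ≠ i' := by
    intro i i'
    rw [hιadj]
    constructor
    · intro h; rintro rfl; exact (joinG _ _).loopless.irrefl _ h
    · intro h; exact h
  have hST : ∀ i j, G.Adj (Sv i) (Tv j) := by
    intro i j; rw [hιadj]; trivial
  have hTT : ∀ j j', ¬ G.Adj (Tv j) (Tv j') := by
    intro j j' h; rw [hιadj] at h; exact h
  have hSvinj : Function.Injective Sv := fun a b h => Sum.inl_injective (hιinj h)
  have hTvinj : Function.Injective Tv := fun a b h => Sum.inr_injective (hιinj h)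
  have hSvTv : ∀ i j, Sv i ≠ Tv j := by
    intro i j h
    exact absurd (hιinj h) (by simp)
  have hSvX : ∀ i, Sv i ∉ X := fun i => hιmem _
  have hTvX : ∀ j, Tv j ∉ X := fun j => hιmem _
  have hU : (Finset.univ : Finset V) = (X ∪ Finset.univ.image Sv) ∪ Finset.univ.image Tv := by
    ext v
    simp only [Finset.mem_univ, true_iff, Finset.mem_union, Finset.mem_image]
    by_cases hv : v ∈ X
    · exact Or.inl (Or.inl hv)
    · obtain ⟨z, hz⟩ := hcover v hv
      cases z with
      | inl i => exact Or.inl (Or.inr ⟨i, trivial, hz⟩)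
      | inr j => exact Or.inr ⟨j, trivial, hz⟩
  have hd1 : Disjoint X (Finset.univ.image Sv) := by
    rw [Finset.disjoint_right]
    intro v hv
    simp only [Finset.mem_image] at hv
    obtain ⟨i, _, rfl⟩ := hv
    exact hSvX i
  have hd2 : Disjoint (X ∪ Finset.univ.image Sv) (Finset.univ.image Tv) := by
    rw [Finset.disjoint_right]
    intro v hv
    simp only [Finset.mem_image] at hv
    obtain ⟨j, _, rfl⟩ := hv
    simp only [Finset.mem_union, Finset.mem_image]
    rintro (h | ⟨i, _, h⟩)
    · exact hTvX j h
    · exact hSvTv i j h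
  have hsplit : ∀ g : V → ℝ, ∑ w, g w =
      (∑ u ∈ X, g u) + (∑ i, g (Sv i)) + (∑ j, g (Tv j)) := by
    intro g
    rw [hU, Finset.sum_union hd2, Finset.sum_union hd1,
      Finset.sum_image (fun a _ b _ h => hSvinj h),
      Finset.sum_image (fun a _ b _ h => hTvinj h)]
  set A := adjMat G with hAdef
  have hent : ∀ v w : V, A v w = if G.Adj v w then 1 else 0 := by
    intro v w; simp [hAdef, adjMat, SimpleGraph.adjMatrix_apply]
  set a : V → V → ℝ := fun v w => if G.Adj v w then 1 else 0 with hadef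
  have hasymm : ∀ v w, a v w = a w v := by
    intro v w
    simp only [hadef]
    by_cases h : G.Adj v w
    · rw [if_pos h, if_pos h.symm]
    · rw [if_neg h, if_neg (fun h' => h h'.symm)]
  have row : ∀ f : V → ℝ, A.mulVec f = μ • f → ∀ v,
      (∑ u ∈ X, a v u * f u) + (∑ i, a v (Sv i) * f (Sv i))
        + (∑ j, a v (Tv j) * f (Tv j)) = μ * f v := by
    intro f hf v
    have h1 : ∑ w, a v w * f w = μ * f v := by
      have h2 := congrFun hf v
      simp only [Matrix.mulVec, dotProduct, hent, Pi.smul_apply, smul_eq_mul] at h2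
      exact h2
    rw [← h1, hsplit (fun w => a v w * f w)]
  have hsum0 : ∀ f : V → ℝ, A.mulVec f = μ • f →
      (∑ u ∈ X, f u) + (∑ i, f (Sv i)) + (∑ j, f (Tv j)) = 0 := by
    intro f hf
    have h1 := hnm f hf
    simp only [dotProduct, mul_one] at h1
    rw [← hsplit f]
    exact h1
  have hμt : μ = -(t:ℝ) := by linarith
  have tR : (2:ℝ) ≤ (t:ℝ) := by exact_mod_cast ht
  have sR : (2:ℝ) ≤ (s:ℝ) := by exact_mod_cast hs
  have hfexists : ∀ u : {x : V // x ∈ X}, ∃ f : V → ℝ, A.mulVec f = μ • f ∧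
      ∀ v : {x : V // x ∈ X}, f ↑v = if (v:V) = ↑u then 1 else 0 := by
    intro u
    obtain ⟨f, h1, h2⟩ := star_ext G μ X hcard hni (fun v => if (v:V) = ↑u then 1 else 0)
    exact ⟨f, h1, h2⟩
  choose f hf1 hf2 using hfexists
  have hXrowf : ∀ (u : {x : V // x ∈ X}) (v : V),
      ∑ u' ∈ X, a v u' * f u u' = a v ↑u := by
    intro u v
    have h1 : ∀ u' ∈ X, a v u' * f u u' = if u' = ↑u then a v u' else 0 := by
      intro u' hu'
      have := hf2 u ⟨u', hu'⟩
      simp only at this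
      rw [this]
      by_cases h : u' = ↑u <;> simp [h]
    rw [Finset.sum_congr rfl h1, Finset.sum_ite_eq' X (↑u : V) (fun u' => a v u'),
      if_pos u.2]
  have hXsumf : ∀ u : {x : V // x ∈ X}, ∑ u' ∈ X, f u u' = 1 := by
    intro u
    have h1 : ∀ u' ∈ X, f u u' = if u' = ↑u then (1:ℝ) else 0 := by
      intro u' hu'
      exact hf2 u ⟨u', hu'⟩
    rw [Finset.sum_congr rfl h1, Finset.sum_ite_eq' X (↑u : V) (fun _ => (1:ℝ)),
      if_pos u.2]
  have ht1 : (t:ℝ) - 1 ≠ 0 := by linarith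
  have ht0 : (t:ℝ) ≠ 0 := by linarith
  have key : ∀ u : {x : V // x ∈ X},
      (∀ j, G.Adj (Tv j) ↑u) ∧ (∀ j, f u (Tv j) = -1) ∧
      (∀ i, f u (Sv i) = (1 - a ↑u (Sv i)) / ((t:ℝ) - 1)) ∧
      (∑ i, a ↑u (Sv i)) = (s:ℝ) - ((t:ℝ)-1)^2 := by
    intro u
    have hrow := row (f u) (hf1 u)
    have hFu : f u ↑u = 1 := by rw [hf2 u u]; simp
    set S1 := ∑ i, f u (Sv i) with hS1def
    set T1 := ∑ j, f u (Tv j) with hT1def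
    have h0 : 1 + S1 + T1 = 0 := by
      have h := hsum0 (f u) (hf1 u)
      rw [hXsumf u] at h
      exact h
    have hTrow : ∀ j, a (Tv j) ↑u + S1 = -(t:ℝ) * f u (Tv j) := by
      intro j
      have h := hrow (Tv j)
      rw [hXrowf u (Tv j)] at h
      have e2 : ∑ i, a (Tv j) (Sv i) * f u (Sv i) = S1 := by
        rw [hS1def]
        apply Finset.sum_congr rfl
        intro i _
        rw [show a (Tv j) (Sv i) = 1 from by simp [hadef, (hST i j).symm], one_mul]
      have e3 : ∑ j', a (Tv j) (Tv j') * f u (Tv j') = 0 := by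
        apply Finset.sum_eq_zero
        intro j' _
        rw [show a (Tv j) (Tv j') = 0 from by simp [hadef, hTT j j'], zero_mul]
      rw [e2, e3, hμt] at h
      linarith
    have hq : ∑ j, a (Tv j) ↑u = (t:ℝ) := by
      have hsum : ∑ j, (a (Tv j) ↑u + S1) = ∑ j, (-(t:ℝ) * f u (Tv j)) :=
        Finset.sum_congr rfl (fun j _ => hTrow j)
      rw [Finset.sum_add_distrib, Finset.sum_const, Finset.card_univ, Fintype.card_fin,
        ← Finset.mul_sum, ← hT1def, nsmul_eq_mul] at hsum
      have hT1 : T1 = -1 - S1 := by linarith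
      rw [hT1] at hsum
      nlinarith [hsum]
    have hadjT : ∀ j, G.Adj (Tv j) ↑u := by
      have hz : ∑ j, (1 - a (Tv j) ↑u) = 0 := by
        rw [Finset.sum_sub_distrib, Finset.sum_const, Finset.card_univ, Fintype.card_fin,
          hq, nsmul_eq_mul]
        ring
      intro j
      have hj := (Finset.sum_eq_zero_iff_of_nonneg (fun j _ => by
        by_cases h : G.Adj (Tv j) ↑u <;> simp [hadef, h])).mp hz j (Finset.mem_univ j)
      by_contra h
      rw [show a (Tv j) ↑u = 0 from by simp [hadef, h]] at hj
      norm_num at hj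
    have hfT : ∀ j, f u (Tv j) = -(1 + S1)/(t:ℝ) := by
      intro j
      have h := hTrow j
      rw [show a (Tv j) ↑u = 1 from by simp [hadef, hadjT j]] at h
      field_simp
      linarith
    have hSrow : ∀ i, a (Sv i) ↑u + S1 + T1 = (1 - (t:ℝ)) * f u (Sv i) + f u (Sv i) * 0 := by
      intro i
      have h := hrow (Sv i)
      rw [hXrowf u (Sv i)] at h
      have e2 : ∑ i', a (Sv i) (Sv i') * f u (Sv i') = S1 - f u (Sv i) := by
        have h1 : ∀ i' ∈ Finset.univ, a (Sv i) (Sv i') * f u (Sv i')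
            = f u (Sv i') - (if i' = i then f u (Sv i') else 0) := by
          intro i' _
          by_cases h' : i' = i
          · subst h'
            rw [show a (Sv i') (Sv i') = 0 from by simp [hadef], if_pos rfl]
            ring
          · rw [show a (Sv i) (Sv i') = 1 from by
              simp [hadef, (hSS i i').mpr (fun h'' => h' h''.symm)], if_neg h']
            ring
        rw [Finset.sum_congr rfl h1, Finset.sum_sub_distrib,
          Finset.sum_ite_eq' Finset.univ i (fun i' => f u (Sv i')), if_pos (Finset.mem_univ i),
          ← hS1def]
      have e3 : ∑ j, a (Sv i) (Tv j) * f u (Tv j) = T1 := by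
        rw [hT1def]
        apply Finset.sum_congr rfl
        intro j _
        rw [show a (Sv i) (Tv j) = 1 from by simp [hadef, hST i j], one_mul]
      rw [e2, e3, hμt] at h
      ring_nf
      ring_nf at h
      linarith
    have hfS : ∀ i, f u (Sv i) = (1 - a ↑u (Sv i)) / ((t:ℝ) - 1) := by
      intro i
      have h := hSrow i
      rw [hasymm (Sv i) ↑u] at h
      have hst : S1 + T1 = -1 := by linarith
      field_simp
      nlinarith [h, hst]
    have hurow := hrow ↑u
    rw [hXrowf u ↑u] at hurow
    have e2 : ∑ i, a ↑u (Sv i) * f u (Sv i) = 0 := by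
      apply Finset.sum_eq_zero
      intro i _
      rw [hfS i]
      by_cases h : G.Adj ↑u (Sv i) <;> simp [hadef, h]
    have e3 : ∑ j, a ↑u (Tv j) * f u (Tv j) = (t:ℝ) * (-(1 + S1)/(t:ℝ)) := by
      have h1 : ∀ j ∈ Finset.univ, a ↑u (Tv j) * f u (Tv j) = -(1 + S1)/(t:ℝ) := by
        intro j _
        rw [hfT j, show a ↑u (Tv j) = 1 from by simp [hadef, (hadjT j).symm], one_mul]
      rw [Finset.sum_congr rfl h1, Finset.sum_const, Finset.card_univ, Fintype.card_fin,
        nsmul_eq_mul]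
    have hS1 : S1 = (t:ℝ) - 1 := by
      rw [e2, e3, hμt, hFu, show a ↑u ↑u = 0 from by simp [hadef]] at hurow
      field_simp at hurow
      linarith
    refine ⟨hadjT, fun j => by rw [hfT j, hS1]; field_simp; ring, hfS, ?_⟩
    have hps : S1 = ((s:ℝ) - ∑ i, a ↑u (Sv i)) / ((t:ℝ) - 1) := by
      rw [hS1def, Finset.sum_congr rfl (fun i _ => hfS i), ← Finset.sum_div,
        Finset.sum_sub_distrib, Finset.sum_const, Finset.card_univ, Fintype.card_fin,
        nsmul_eq_mul, mul_one]
    rw [hS1, eq_div_iff ht1] at hps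
    have hsq : ((t:ℝ)-1)^2 = ((t:ℝ)-1) * ((t:ℝ)-1) := sq ((t:ℝ)-1)
    linarith [hps]
  have hcross : ∀ u v : {x : V // x ∈ X}, (↑u : V) ≠ ↑v →
      ∑ i, a ↑v (Sv i) * a ↑u (Sv i)
        = (s:ℝ) - ((t:ℝ)-1)^2 - ((t:ℝ)-1) * ((t:ℝ) - a ↑v ↑u) := by
    intro u v huv
    have h := (row (f u) (hf1 u)) ↑v
    rw [hXrowf u ↑v] at h
    obtain ⟨hT_u, hfT_u, hfS_u, hp_u⟩ := key u
    obtain ⟨hT_v, hfT_v, hfS_v, hp_v⟩ := key v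
    have hfuv : f u ↑v = 0 := by
      rw [hf2 u v, if_neg (fun h' => huv h'.symm)]
    have e2 : ∑ i, a ↑v (Sv i) * f u (Sv i)
        = ((∑ i, a ↑v (Sv i)) - ∑ i, a ↑v (Sv i) * a ↑u (Sv i)) / ((t:ℝ)-1) := by
      have h1 : ∀ i ∈ Finset.univ, a ↑v (Sv i) * f u (Sv i)
          = (a ↑v (Sv i) - a ↑v (Sv i) * a ↑u (Sv i)) / ((t:ℝ)-1) := by
        intro i _
        rw [hfS_u i]
        field_simp
      rw [Finset.sum_congr rfl h1, ← Finset.sum_div, Finset.sum_sub_distrib]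
    have e3 : ∑ j, a ↑v (Tv j) * f u (Tv j) = -(t:ℝ) := by
      have h1 : ∀ j ∈ Finset.univ, a ↑v (Tv j) * f u (Tv j) = -1 := by
        intro j _
        rw [hfT_u j, show a ↑v (Tv j) = 1 from by simp [hadef, (hT_v j).symm]]
        ring
      rw [Finset.sum_congr rfl h1, Finset.sum_const, Finset.card_univ, Fintype.card_fin,
        nsmul_eq_mul]
      ring
    rw [e2, e3, hμt, hfuv, hp_v] at h
    have h4 : ((s:ℝ) - ((t:ℝ)-1)^2 - ∑ i, a ↑v (Sv i) * a ↑u (Sv i)) / ((t:ℝ)-1)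
        = (t:ℝ) - a ↑v ↑u := by linarith
    rw [div_eq_iff ht1] at h4
    nlinarith [h4]
  have hadjX : ∀ u v : {x : V // x ∈ X}, (↑u : V) ≠ ↑v → G.Adj ↑u ↑v := by
    intro u v huv
    obtain ⟨hT_u, hfT_u, hfS_u, hp_u⟩ := key u
    obtain ⟨hT_v, hfT_v, hfS_v, hp_v⟩ := key v
    have hbound : (∑ i, a ↑u (Sv i)) + (∑ i, a ↑v (Sv i))
        - ∑ i, a ↑v (Sv i) * a ↑u (Sv i) ≤ (s:ℝ) := by
      have h1 : ∑ i, (a ↑u (Sv i) + a ↑v (Sv i) - a ↑v (Sv i) * a ↑u (Sv i))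
          ≤ ∑ i : Fin s, (1:ℝ) := by
        apply Finset.sum_le_sum
        intro i _
        by_cases h2 : G.Adj ↑u (Sv i) <;> by_cases h3 : G.Adj ↑v (Sv i) <;>
          simp [hadef, h2, h3]
      rw [Finset.sum_const, Finset.card_univ, Fintype.card_fin, nsmul_eq_mul, mul_one] at h1
      calc (∑ i, a ↑u (Sv i)) + (∑ i, a ↑v (Sv i)) - ∑ i, a ↑v (Sv i) * a ↑u (Sv i)
          = ∑ i, (a ↑u (Sv i) + a ↑v (Sv i) - a ↑v (Sv i) * a ↑u (Sv i)) := by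
            rw [Finset.sum_sub_distrib, Finset.sum_add_distrib]
        _ ≤ (s:ℝ) := h1
    by_contra hna
    have ha0 : a ↑v ↑u = 0 := by
      simp only [hadef, ite_eq_right_iff]
      intro h'
      exact absurd h'.symm hna
    have hc := hcross u v huv
    rw [ha0] at hc
    rw [hp_u, hp_v, hc] at hbound
    nlinarith [hbound, tR]
  -- degree equations
  have hdeg : ∀ v : V, ∑ w, a v w = (r:ℝ) := by
    intro v
    have h1 : ∑ w, a v w = ((Finset.univ.filter (G.Adj v)).card : ℝ) := by
      simp [hadef, Finset.sum_boole]
    rw [h1, show Finset.univ.filter (G.Adj v) = G.neighborFinset v from by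
      ext w; simp [SimpleGraph.mem_neighborFinset]]
    rw [show (G.neighborFinset v).card = r from hreg v]
  have j0 : Fin t := ⟨0, by omega⟩
  have hr1 : (r:ℝ) = (X.card : ℝ) + (s:ℝ) := by
    have h := hdeg (Tv j0)
    rw [hsplit (fun w => a (Tv j0) w)] at h
    have e1 : ∑ u' ∈ X, a (Tv j0) u' = (X.card : ℝ) := by
      rw [Finset.sum_congr rfl (fun u' hu' => show a (Tv j0) u' = 1 from by
        simp [hadef, (key ⟨u', hu'⟩).1 j0]), Finset.sum_const, nsmul_eq_mul, mul_one]
    have e2 : ∑ i, a (Tv j0) (Sv i) = (s:ℝ) := by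
      rw [Finset.sum_congr rfl (fun i _ => show a (Tv j0) (Sv i) = 1 from by
        simp [hadef, (hST i j0).symm]), Finset.sum_const, Finset.card_univ,
        Fintype.card_fin, nsmul_eq_mul, mul_one]
    have e3 : ∑ j, a (Tv j0) (Tv j) = 0 := by
      apply Finset.sum_eq_zero
      intro j _
      simp [hadef, hTT j0 j]
    rw [e1, e2, e3] at h
    linarith
  have hXne : X.Nonempty := by
    rw [← Finset.card_pos, hcard]
    have h1 : Module.End.eigenspace (Matrix.toLin' (adjMat G)) μ ≠ ⊥ :=
      Module.End.hasEigenvalue_iff.mp hμ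
    have h2 : Module.finrank ℝ (Module.End.eigenspace (Matrix.toLin' (adjMat G)) μ) ≠ 0 :=
      fun h0 => h1 (Submodule.finrank_eq_zero.mp h0)
    have h3 : eigMult G μ ≠ 0 := h2
    omega
  obtain ⟨u0v, hu0v⟩ := hXne
  have hr2 : (r:ℝ) = ((X.card : ℝ) - 1) + ((s:ℝ) - ((t:ℝ)-1)^2) + (t:ℝ) := by
    set u0 : {x : V // x ∈ X} := ⟨u0v, hu0v⟩ with hu0
    have h := hdeg ↑u0
    rw [hsplit (fun w => a ↑u0 w)] at h
    have e1 : ∑ u' ∈ X, a ↑u0 u' = (X.card : ℝ) - 1 := by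
      have h1 : ∀ u' ∈ X, a ↑u0 u' = 1 - (if u' = ↑u0 then 1 else 0) := by
        intro u' hu'
        by_cases h2 : u' = (↑u0 : V)
        · rw [if_pos h2, h2, show a (↑u0 : V) ↑u0 = 0 from by simp [hadef]]
          ring
        · rw [if_neg h2, show a (↑u0 : V) u' = 1 from by
            simp [hadef, hadjX u0 ⟨u', hu'⟩ (fun h3 => h2 h3.symm)]]
          ring
      rw [Finset.sum_congr rfl h1, Finset.sum_sub_distrib,
        Finset.sum_ite_eq' X (↑u0 : V) (fun _ => (1:ℝ)), if_pos u0.2, Finset.sum_const,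
        nsmul_eq_mul, mul_one]
    have e2 := (key u0).2.2.2
    have e3 : ∑ j, a ↑u0 (Tv j) = (t:ℝ) := by
      rw [Finset.sum_congr rfl (fun j _ => show a (↑u0:V) (Tv j) = 1 from by
        simp [hadef, ((key u0).1 j).symm]), Finset.sum_const, Finset.card_univ,
        Fintype.card_fin, nsmul_eq_mul, mul_one]
    rw [e1, e2, e3] at h
    linarith
  have ht2 : t = 2 := by
    have h : ((t:ℝ) - 1)^2 = (t:ℝ) - 1 := by linarith
    have h2 : (t:ℝ) = 2 := by nlinarith [h]
    exact_mod_cast h2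
  subst ht2
  have hμ2 : μ = -2 := by
    rw [hμt]; norm_num
  refine ⟨hμ2, rfl, ?_⟩
  -- each star vertex has a unique non-neighbour in S
  have hp1 : ∀ u : {x : V // x ∈ X}, ∑ i, a ↑u (Sv i) = (s:ℝ) - 1 := by
    intro u
    have h := (key u).2.2.2
    linarith
  have hZcard : ∀ u : {x : V // x ∈ X},
      (Finset.univ.filter (fun i => ¬ G.Adj ↑u (Sv i))).card = 1 := by
    intro u
    have h1 : ∑ i, (1 - a ↑u (Sv i))
        = ((Finset.univ.filter (fun i => ¬ G.Adj ↑u (Sv i))).card : ℝ) := by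
      rw [Finset.sum_congr rfl (fun i _ => show (1:ℝ) - a ↑u (Sv i)
        = if ¬ G.Adj ↑u (Sv i) then 1 else 0 from by
          by_cases h2 : G.Adj ↑u (Sv i) <;> simp [hadef, h2])]
      rw [Finset.sum_boole]
    have h2 : ∑ i, ((1:ℝ) - a ↑u (Sv i)) = 1 := by
      rw [Finset.sum_sub_distrib, Finset.sum_const, Finset.card_univ, Fintype.card_fin,
        nsmul_eq_mul, mul_one, hp1 u]
      ring
    rw [h2] at h1
    exact_mod_cast h1.symm
  have hm0 : ∀ u : {x : V // x ∈ X}, ∃ i,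
      Finset.univ.filter (fun i => ¬ G.Adj ↑u (Sv i)) = {i} :=
    fun u => Finset.card_eq_one.mp (hZcard u)
  choose m hmspec using hm0
  have hmadj : ∀ (u : {x : V // x ∈ X}) i, ¬ G.Adj ↑u (Sv i) ↔ i = m u := by
    intro u i
    constructor
    · intro h
      have h2 : i ∈ Finset.univ.filter (fun i => ¬ G.Adj ↑u (Sv i)) := by
        simp [h]
      rw [hmspec u] at h2
      simpa using h2
    · rintro rfl
      have h2 : m u ∈ Finset.univ.filter (fun i => ¬ G.Adj ↑u (Sv i)) := by
        rw [hmspec u]; simp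
      exact (Finset.mem_filter.mp h2).2
  have hAXS : ∀ (u : {x : V // x ∈ X}) i, G.Adj ↑u (Sv i) ↔ i ≠ m u := by
    intro u i
    constructor
    · intro h heq
      exact (hmadj u i).mpr heq h
    · intro h
      by_contra h2
      exact h ((hmadj u i).mp h2)
  -- each S vertex has a unique non-neighbour in X
  have hWcard : ∀ i, (X.filter (fun u' => ¬ G.Adj (Sv i) u')).card = 1 := by
    intro i
    have h := hdeg (Sv i)
    rw [hsplit (fun w => a (Sv i) w)] at h
    have e2 : ∑ i', a (Sv i) (Sv i') = (s:ℝ) - 1 := by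
      have h1 : ∀ i' ∈ Finset.univ, a (Sv i) (Sv i') = 1 - (if i' = i then 1 else 0) := by
        intro i' _
        by_cases h2 : i' = i
        · subst h2; rw [if_pos rfl, show a (Sv i') (Sv i') = 0 from by simp [hadef]]; ring
        · rw [if_neg h2, show a (Sv i) (Sv i') = 1 from by
            simp [hadef, (hSS i i').mpr (fun h3 => h2 h3.symm)]]
          ring
      rw [Finset.sum_congr rfl h1, Finset.sum_sub_distrib,
        Finset.sum_ite_eq' Finset.univ i (fun _ => (1:ℝ)), if_pos (Finset.mem_univ i),
        Finset.sum_const, Finset.card_univ, Fintype.card_fin, nsmul_eq_mul, mul_one]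
    have e3 : ∑ j, a (Sv i) (Tv j) = 2 := by
      rw [Finset.sum_congr rfl (fun j _ => show a (Sv i) (Tv j) = 1 from by
        simp [hadef, hST i j]), Finset.sum_const, Finset.card_univ, Fintype.card_fin,
        nsmul_eq_mul, mul_one]
      norm_num
    have e1 : ∑ u' ∈ X, a (Sv i) u' = (X.card : ℝ) - 1 := by
      rw [e2, e3] at h
      rw [hr1] at h
      linarith
    have h1 : ∑ u' ∈ X, ((1:ℝ) - a (Sv i) u')
        = ((X.filter (fun u' => ¬ G.Adj (Sv i) u')).card : ℝ) := by
      rw [Finset.sum_congr rfl (fun u' _ => show (1:ℝ) - a (Sv i) u'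
        = if ¬ G.Adj (Sv i) u' then 1 else 0 from by
          by_cases h2 : G.Adj (Sv i) u' <;> simp [hadef, h2])]
      rw [Finset.sum_boole]
    have h2 : ∑ u' ∈ X, ((1:ℝ) - a (Sv i) u') = 1 := by
      rw [Finset.sum_sub_distrib, e1, Finset.sum_const, nsmul_eq_mul, mul_one]
      ring
    rw [h2] at h1
    exact_mod_cast h1.symm
  have hw0 : ∀ i, ∃ u', X.filter (fun u' => ¬ G.Adj (Sv i) u') = {u'} :=
    fun i => Finset.card_eq_one.mp (hWcard i)
  choose w hwspec using hw0
  have hwmem : ∀ i, w i ∈ X ∧ ¬ G.Adj (Sv i) (w i) := by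
    intro i
    have h2 : w i ∈ X.filter (fun u' => ¬ G.Adj (Sv i) u') := by
      rw [hwspec i]; simp
    exact Finset.mem_filter.mp h2
  have hwX : ∀ i, w i ∈ X := fun i => (hwmem i).1
  have hwm : ∀ i, m ⟨w i, hwX i⟩ = i := by
    intro i
    have h1 : ¬ G.Adj (↑(⟨w i, hwX i⟩ : {x : V // x ∈ X})) (Sv i) :=
      fun h => (hwmem i).2 h.symm
    exact ((hmadj ⟨w i, hwX i⟩ i).mp h1).symm
  -- m is injective
  have hminj : ∀ u v : {x : V // x ∈ X}, m u = m v → u = v := by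
    intro u v hmuv
    by_contra hne
    have huv : (↑u : V) ≠ ↑v := fun h => hne (Subtype.ext h)
    have hsum : ∑ i, a ↑v (Sv i) * a ↑u (Sv i) = (s:ℝ) - 1 := by
      have h1 : ∀ i ∈ Finset.univ, a ↑v (Sv i) * a ↑u (Sv i)
          = 1 - (if i = m u then 1 else 0) := by
        intro i _
        by_cases hi : i = m u
        · rw [if_pos hi]
          rw [show a ↑u (Sv i) = 0 from by
            simp only [hadef, ite_eq_right_iff]
            intro h2; exact absurd h2 ((hmadj u i).mpr hi)]
          ring
        · rw [if_neg hi]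
          rw [show a ↑u (Sv i) = 1 from by
            simp [hadef, (hAXS u i).mpr hi]]
          rw [show a ↑v (Sv i) = 1 from by
            simp [hadef, (hAXS v i).mpr (fun h2 => hi (h2.trans hmuv.symm))]]
          ring
      rw [Finset.sum_congr rfl h1, Finset.sum_sub_distrib,
        Finset.sum_ite_eq' Finset.univ (m u) (fun _ => (1:ℝ)), if_pos (Finset.mem_univ _),
        Finset.sum_const, Finset.card_univ, Fintype.card_fin, nsmul_eq_mul, mul_one]
    have hc := hcross u v huv
    rw [show a ↑v ↑u = 1 from by
      simp [hadef, hadjX v u (Ne.symm huv)]] at hc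
    rw [hsum] at hc
    push_cast at hc
    nlinarith [hc]
  have hwinj : Function.Injective w := by
    intro i i' h
    have h1 := hwm i
    rw [show (⟨w i, hwX i⟩ : {x : V // x ∈ X}) = ⟨w i', hwX i'⟩ from Subtype.ext h,
      hwm i'] at h1
    exact h1.symm
  have hAwS : ∀ i i', G.Adj (w i) (Sv i') ↔ i' ≠ i := by
    intro i i'
    have h1 := hAXS ⟨w i, hwX i⟩ i'
    rw [hwm i] at h1
    exact h1
  have hAwT : ∀ i j, G.Adj (w i) (Tv j) := fun i j =>
    ((key ⟨w i, hwX i⟩).1 j).symm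
  have hAww : ∀ i i', i ≠ i' → G.Adj (w i) (w i') := fun i i' hne =>
    hadjX ⟨w i, hwX i⟩ ⟨w i', hwX i'⟩ (fun h2 => hne (hwinj h2))
  have hwSne : ∀ i i', w i ≠ Sv i' := fun i i' h => hSvX i' (h ▸ hwX i)
  -- X has exactly s elements
  have hmbij : Function.Bijective m := by
    constructor
    · intro u v h; exact hminj u v h
    · intro i; exact ⟨⟨w i, hwX i⟩, hwm i⟩
  have hks : X.card = s := by
    have h1 : Fintype.card {x : V // x ∈ X} = Fintype.card (Fin s) :=
      Fintype.card_of_bijective hmbij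
    rw [Fintype.card_coe, Fintype.card_fin] at h1
    exact h1
  -- cardinality of V
  have hcV : Fintype.card V = 2 * (s + 1) := by
    have h1 : (Finset.univ : Finset V).card
        = ((X ∪ Finset.univ.image Sv) ∪ Finset.univ.image Tv).card := by rw [← hU]
    rw [Finset.card_union_of_disjoint hd2, Finset.card_union_of_disjoint hd1,
      Finset.card_image_of_injective _ hSvinj, Finset.card_image_of_injective _ hTvinj] at h1
    simp only [Finset.card_univ, Fintype.card_fin] at h1
    omega
  -- the isomorphism
  set φ : Fin (s+1) × Fin 2 → V := fun z =>
    if h : (z.1 : ℕ) < s then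
      (if z.2 = 0 then w ⟨z.1, h⟩ else Sv ⟨z.1, h⟩)
    else Tv z.2
    with hφdef
  have hφadj : ∀ z z' : Fin (s+1) × Fin 2, G.Adj (φ z) (φ z') ↔ z.1 ≠ z'.1 := by
    rintro ⟨i, c⟩ ⟨i', c'⟩
    have hfin : (i ≠ i') ↔ (i : ℕ) ≠ (i' : ℕ) := by
      constructor
      · intro h h2; exact h (Fin.ext h2)
      · intro h h2; exact h (congrArg Fin.val h2)
    simp only [hφdef]
    by_cases h : (i : ℕ) < s <;> by_cases h' : (i' : ℕ) < s
    · rw [dif_pos h, dif_pos h']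
      have hii : ((⟨(i:ℕ), h⟩ : Fin s) ≠ ⟨(i':ℕ), h'⟩) ↔ (i ≠ i') := by
        simp [Fin.ext_iff, hfin]
      by_cases hc : c = 0 <;> by_cases hc' : c' = 0
      · rw [if_pos hc, if_pos hc', ← hii]
        constructor
        · intro hadj heq
          rw [heq] at hadj
          exact G.loopless.irrefl _ hadj
        · intro hne
          exact hAww _ _ (fun h2 => hne (Fin.ext (congrArg Fin.val h2)))
      · rw [if_pos hc, if_neg hc', ← hii]
        rw [hAwS]
        exact ne_comm
      · rw [if_neg hc, if_pos hc', ← hii]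
        rw [G.adj_comm, hAwS]
      · rw [if_neg hc, if_neg hc', ← hii]
        exact hSS _ _
    · rw [dif_pos h, dif_neg h']
      have hne : i ≠ i' := by
        rw [hfin]; omega
      refine iff_of_true ?_ hne
      by_cases hc : c = 0
      · rw [if_pos hc]
        exact hAwT _ _
      · rw [if_neg hc]
        exact hST _ _
    · rw [dif_neg h, dif_pos h']
      have hne : i ≠ i' := by
        rw [hfin]; omega
      refine iff_of_true ?_ hne
      rw [G.adj_comm]
      by_cases hc' : c' = 0
      · rw [if_pos hc']
        exact hAwT _ _
      · rw [if_neg hc']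
        exact hST _ _
    · rw [dif_neg h, dif_neg h']
      have heq : i = i' := by
        have h1 := i.isLt
        have h2 := i'.isLt
        apply Fin.ext
        omega
      simp only [heq, ne_eq, not_true_eq_false, iff_false]
      exact hTT c c'
  have hφinj : Function.Injective φ := by
    rintro ⟨i, c⟩ ⟨i', c'⟩ heq
    have h1 : i = i' := by
      by_contra hne
      have h2 := (hφadj ⟨i, c⟩ ⟨i', c'⟩).mpr hne
      rw [heq] at h2
      exact G.loopless.irrefl _ h2
    subst h1
    have h2 : c = c' := by
      simp only [hφdef] at heq
      by_cases h : (i : ℕ) < s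
      · rw [dif_pos h, dif_pos h] at heq
        by_cases hc : c = 0 <;> by_cases hc' : c' = 0
        · rw [hc, hc']
        · rw [if_pos hc, if_neg hc'] at heq
          exact absurd heq (hwSne _ _)
        · rw [if_neg hc, if_pos hc'] at heq
          exact absurd heq.symm (hwSne _ _)
        · apply Fin.ext
          have h3 := c.isLt
          have h4 := c'.isLt
          have h5 : c.val ≠ 0 := fun h6 => hc (Fin.ext h6)
          have h6 : c'.val ≠ 0 := fun h7 => hc' (Fin.ext h7)
          omega
      · rw [dif_neg h, dif_neg h] at heq
        exact hTvinj heq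
    rw [h2]
  have hφbij : Function.Bijective φ := by
    rw [Fintype.bijective_iff_injective_and_card]
    refine ⟨hφinj, ?_⟩
    rw [hcV]
    simp [mul_comm]
  refine ⟨⟨(Equiv.ofBijective φ hφbij).symm, ?_⟩⟩
  intro z z'
  rw [matching_compl_adj]
  rw [← hφadj]
  rw [show φ ((Equiv.ofBijective φ hφbij).symm z) = z from
    (Equiv.ofBijective φ hφbij).apply_symm_apply z]
  rw [show φ ((Equiv.ofBijective φ hφbij).symm z') = z' from
    (Equiv.ofBijective φ hφbij).apply_symm_apply z']


end
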